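/- Let (M,·) be a moving semigroup and let x : ℕ → M be an injective sequence. Then there exists a nonprincipal idempotent ultrafilter 𝓤 on M such that for every m ∈ ℕ, the set FP((x_n)_{n≥m}) of finite products of terms of the tail sequence belongs to 𝓤. -/

import Mathlib

open Filter FirstOrder FirstOrder.Language

attribute [local instance] Ultrafilter.mul

/-! ## Combinatorial notions in a semigroup -/

/-- `X` is an IP set: it contains `FP u` (all finite products, in increasing order of indices,
of distinct terms) of some sequence `u`. -/
def IsIP {M : Type*} [Semigroup M] (X : Set M) : Prop :=
  ∃ u : Stream' M, Hindman.FP u ⊆ X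

/-- `X` is IIP (infinitely IP): it contains an infinite set of the form `FP u`. -/
def IsIIP {M : Type*} [Semigroup M] (X : Set M) : Prop :=
  ∃ u : Stream' M, Hindman.FP u ⊆ X ∧ (Hindman.FP u).Infinite

/-- `X` is DIP (distinctly IP): it contains `FP u` for an injective sequence `u`. -/
def IsDIP {M : Type*} [Semigroup M] (X : Set M) : Prop :=
  ∃ u : Stream' M, Function.Injective u ∧ Hindman.FP u ⊆ X

/-- An ultrafilter is nonprincipal if it is not of the form `{A | a ∈ A}` for any `a`. -/
def Ultrafilter.Nonprincipal {M : Type*} (U : Ultrafilter M) : Prop :=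
  ∀ a : M, U ≠ pure a

/-- A semigroup is moving if the product of two nonprincipal ultrafilters
(for the ultrafilter product `A ∈ U * V ↔ {m | {n | m * n ∈ A} ∈ V} ∈ U`) is nonprincipal. -/
def IsMoving (M : Type*) [Semigroup M] : Prop :=
  ∀ U V : Ultrafilter M, U.Nonprincipal → V.Nonprincipal → (U * V).Nonprincipal

/-! ## Types over a semigroup structure -/

/-- Formulas in one free variable, with parameters from `M`. -/
abbrev Form1 (L : Language) (M : Type*) := L.Formula (M ⊕ Fin 1)

/-- Formulas in two free variables (`x` and `y`), with parameters from `M`. -/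
abbrev Form2 (L : Language) (M : Type*) := L.Formula (M ⊕ Fin 2)

/-- Realization of a 1-variable formula with parameters at the point `a`. -/
def Realize1 {L : Language} {M : Type*} (S : L.Structure M) (φ : Form1 L M) (a : M) : Prop :=
  @Formula.Realize L M S _ φ (Sum.elim id fun _ => a)

/-- Realization of a 2-variable formula with parameters at the pair `(a, b)`. -/
def Realize2 {L : Language} {M : Type*} (S : L.Structure M) (φ : Form2 L M) (a b : M) : Prop :=
  @Formula.Realize L M S _ φ (Sum.elim id ![a, b])

/-- A complete 1-type over the structure `S` (with parameters for all elements of `M`):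
a complete, finitely satisfiable (in `S`) set of formulas in one free variable. -/
def IsCompleteType1 {L : Language} {M : Type*} (S : L.Structure M)
    (p : Set (Form1 L M)) : Prop :=
  (∀ φ : Form1 L M, φ ∈ p ↔ φ.not ∉ p) ∧
    ∀ s : Finset (Form1 L M), ↑s ⊆ p → ∃ a : M, ∀ φ ∈ s, Realize1 S φ a

/-- A complete 2-type over the structure `S` (with parameters for all elements of `M`). -/
def IsCompleteType2 {L : Language} {M : Type*} (S : L.Structure M)
    (q : Set (Form2 L M)) : Prop :=
  (∀ φ : Form2 L M, φ ∈ q ↔ φ.not ∉ q) ∧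
    ∀ s : Finset (Form2 L M), ↑s ⊆ q → ∃ a b : M, ∀ φ ∈ s, Realize2 S φ a b

/-- `substX u φ` is `φ(u, y)`: the element `u` is substituted for the variable `x`. -/
def substX {L : Language} {M : Type*} (u : M) (φ : Form2 L M) : Form2 L M :=
  φ.subst (Sum.elim (fun m => Term.var (Sum.inl m))
    ![Term.var (Sum.inl u), Term.var (Sum.inr 1)])

/-- A 2-type `q(x, y)` is independent if for every `φ(x, y) ∈ q` there is `u ∈ M` with
`φ(u, y) ∈ q`. -/
def IsIndependent {L : Language} {M : Type*} (q : Set (Form2 L M)) : Prop :=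
  ∀ φ ∈ q, ∃ u : M, substX u φ ∈ q

/-- `toX φ` views the 1-variable formula `φ` as a 2-variable formula `φ(x)`. -/
def toX {L : Language} {M : Type*} (φ : Form1 L M) : Form2 L M :=
  φ.subst (Sum.elim (fun m => Term.var (Sum.inl m)) fun _ => Term.var (Sum.inr 0))

/-- `toY φ` views the 1-variable formula `φ` as a 2-variable formula `φ(y)`. -/
def toY {L : Language} {M : Type*} (φ : Form1 L M) : Form2 L M :=
  φ.subst (Sum.elim (fun m => Term.var (Sum.inl m)) fun _ => Term.var (Sum.inr 1))

/-- `toXY f φ` is `φ(x · y)`, where `f` is the distinguished binary function symbol. -/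
def toXY {L : Language} {M : Type*} (f : L.Functions 2) (φ : Form1 L M) : Form2 L M :=
  φ.subst (Sum.elim (fun m => Term.var (Sum.inl m))
    fun _ => Term.func f ![Term.var (Sum.inr 0), Term.var (Sum.inr 1)])

/-- A complete 1-type `p` over `S` is idempotent (with respect to the binary function symbol `f`
interpreted as the semigroup operation) if there is an independent complete 2-type `q(x, y)` with
`p(x) ⊆ q`, `p(y) ⊆ q` and `p(x · y) ⊆ q`. -/
def IsIdempotentType {L : Language} {M : Type*} (S : L.Structure M) (f : L.Functions 2)
    (p : Set (Form1 L M)) : Prop :=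
  IsCompleteType1 S p ∧
    ∃ q : Set (Form2 L M), IsCompleteType2 S q ∧ IsIndependent q ∧
      (∀ φ ∈ p, toX φ ∈ q) ∧ (∀ φ ∈ p, toY φ ∈ q) ∧ (∀ φ ∈ p, toXY f φ ∈ q)

/-- A 1-type over `S` is principal if it is realized by an element of `M`. -/
def IsPrincipalType {L : Language} {M : Type*} (S : L.Structure M)
    (p : Set (Form1 L M)) : Prop :=
  ∃ a : M, ∀ φ ∈ p, Realize1 S φ a


/-! ### Auxiliary lemmas for the proof -/

lemma Ultrafilter.nonprincipal_iff_le_cofinite {M : Type*} (U : Ultrafilter M) :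
    U.Nonprincipal ↔ (U : Filter M) ≤ cofinite := by
  constructor
  · intro h
    rcases U.le_cofinite_or_eq_pure with h1 | ⟨a, rfl⟩
    · exact h1
    · exact absurd rfl (h a)
  · rintro h a rfl
    have : ({a}ᶜ : Set M) ∈ (pure a : Ultrafilter M) :=
      h (Set.finite_singleton a).compl_mem_cofinite
    exact this rfl

/-- in a moving semigroup, for any injective sequence `x` there is a
nonprincipal idempotent ultrafilter containing `FP` of every tail of `x`. -/
theorem exists_nonprincipal_idempotent_mem_FP_drop {M : Type*} [Semigroup M] (hM : IsMoving M)
    (x : Stream' M) (hx : Function.Injective x) :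
    ∃ U : Ultrafilter M, U.Nonprincipal ∧ U * U = U ∧
      ∀ m : ℕ, Hindman.FP (x.drop m) ∈ U := by
  haveI : Nonempty M := ⟨x 0⟩
  let S : Set (Ultrafilter M) :=
    (⋂ n, { U | ∀ᶠ m in U, m ∈ Hindman.FP (x.drop n) }) ∩ { U | U.Nonprincipal }
  have hNPeq : { U : Ultrafilter M | U.Nonprincipal }
      = ⋂ a : M, { U : Ultrafilter M | ∀ᶠ m in ↑U, m ∈ ({a}ᶜ : Set M) } := by
    ext U
    simp only [Set.mem_iInter, Set.mem_setOf_eq, Ultrafilter.nonprincipal_iff_le_cofinite,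
      le_cofinite_iff_compl_singleton_mem]
    rfl
  have hSclosed : IsClosed S := by
    apply IsClosed.inter
    · exact isClosed_iInter fun i => ultrafilter_isClosed_basic _
    · rw [hNPeq]
      exact isClosed_iInter fun a => ultrafilter_isClosed_basic _
  have hinf : ∀ n, (Hindman.FP (x.drop n)).Infinite := fun n =>
    ((Set.infinite_range_of_injective (f := x.drop n)
        (fun i j hij => by simpa using hx hij)).mono
      (by rintro _ ⟨i, rfl⟩; exact Hindman.FP.singleton _ i))
  have hSne : S.Nonempty := by
    have hdir : Directed (· ≥ ·) fun n => cofinite ⊓ 𝓟 (Hindman.FP (x.drop n)) := by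
      intro m n
      refine ⟨max m n, inf_le_inf_left _ (principal_mono.mpr ?_),
        inf_le_inf_left _ (principal_mono.mpr ?_)⟩
      · have := Hindman.FP_drop_subset_FP (x.drop m) (max m n - m)
        rwa [Stream'.drop_drop, Nat.add_sub_of_le (le_max_left m n)] at this
      · have := Hindman.FP_drop_subset_FP (x.drop n) (max m n - n)
        rwa [Stream'.drop_drop, Nat.add_sub_of_le (le_max_right m n)] at this
    haveI : (⨅ n, cofinite ⊓ 𝓟 (Hindman.FP (x.drop n))).NeBot :=
      iInf_neBot_of_directed hdir fun n => (hinf n).cofinite_inf_principal_neBot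
    set F := ⨅ n, cofinite ⊓ 𝓟 (Hindman.FP (x.drop n)) with hF
    have hle : (Ultrafilter.of F : Filter M) ≤ F := Ultrafilter.of_le F
    refine ⟨Ultrafilter.of F, Set.mem_iInter.mpr fun n => ?_, ?_⟩
    · have h2 : F ≤ 𝓟 (Hindman.FP (x.drop n)) :=
        (iInf_le (fun n => cofinite ⊓ 𝓟 (Hindman.FP (x.drop n))) n).trans inf_le_right
      exact hle (h2 (mem_principal_self _))
    · exact (Ultrafilter.nonprincipal_iff_le_cofinite _).mpr
        (hle.trans ((iInf_le (fun n => cofinite ⊓ 𝓟 (Hindman.FP (x.drop n))) 0).trans inf_le_left))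
  have hSmul : ∀ᵉ (U ∈ S) (V ∈ S), U * V ∈ S := by
    rintro U ⟨hU, hUnp⟩ V ⟨hV, hVnp⟩
    refine ⟨?_, hM U V hUnp hVnp⟩
    rw [Set.mem_iInter] at *
    intro n
    rw [Set.mem_setOf_eq, Ultrafilter.eventually_mul]
    filter_upwards [hU n] with m hm
    obtain ⟨n', hn⟩ := Hindman.FP.mul hm
    filter_upwards [hV (n + n')] with m' hm'
    apply hn
    simpa only [Stream'.drop_drop] using hm'
  obtain ⟨U, hUS, hUidem⟩ := @exists_idempotent_in_compact_subsemigroup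
    (Ultrafilter M) Ultrafilter.semigroup _ _
    Ultrafilter.continuous_mul_left S hSne hSclosed.isCompact hSmul
  exact ⟨U, hUS.2, hUidem, fun m => (Set.mem_iInter.mp hUS.1 m : _)⟩
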